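/- For every real constant c ≥ 1/2, the function x ↦ x^c · ( 4/(5 − x)^2 − 1 ) is non-increasing on the interval [0, 1]. -/

import Mathlib

/-- For every real `c ≥ 1/2`, the function `x ↦ x^c · (4/(5 − x)^2 − 1)` is
non-increasing on `[0, 1]` (here `x^c` is the real power function). -/
theorem antitoneOn_rpow_mul
    (c : ℝ) (hc : 1 / 2 ≤ c) :
    AntitoneOn (fun x : ℝ => x ^ c * (4 / (5 - x) ^ 2 - 1)) (Set.Icc 0 1) := by
  have hc0 : (0:ℝ) < c := by linarith
  have hint : interior (Set.Icc (0:ℝ) 1) = Set.Ioo 0 1 := interior_Icc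
  apply antitoneOn_of_hasDerivWithinAt_nonpos (f' := fun x =>
      c * x ^ (c-1) * (4 / (5 - x) ^ 2 - 1) + x ^ c * (8 * (5 - x) / ((5 - x) ^ 2) ^ 2))
      (convex_Icc 0 1)
  · apply ContinuousOn.mul
    · intro x hx
      exact (Real.continuousAt_rpow_const x c (Or.inr hc0.le)).continuousWithinAt
    · apply ContinuousOn.sub _ continuousOn_const
      apply ContinuousOn.div continuousOn_const (by fun_prop)
      intro x hx
      have : x ≤ 1 := hx.2
      nlinarith
  · intro x hx
    rw [hint] at hx
    have hx0 : 0 < x := hx.1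
    have hne : (5 - x) ^ 2 ≠ 0 := by nlinarith [hx.2]
    have h1 : HasDerivAt (fun x : ℝ => x ^ c) (c * x ^ (c-1)) x :=
      Real.hasDerivAt_rpow_const (Or.inl hx0.ne')
    have h2 : HasDerivAt (fun x : ℝ => 4 / (5 - x) ^ 2 - 1)
        (8 * (5 - x) / ((5 - x) ^ 2) ^ 2) x := by
      have hg : HasDerivAt (fun x : ℝ => (5 - x) ^ 2) (-(2 * (5 - x))) x := by
        have := ((hasDerivAt_id x).const_sub 5).pow 2
        refine this.congr_deriv ?_
        simp
      have := (hasDerivAt_const x (4:ℝ)).div hg hne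
      refine (this.sub_const 1).congr_deriv ?_
      ring
    exact ((h1.mul h2).hasDerivWithinAt)
  · intro x hx
    rw [hint] at hx
    obtain ⟨hx0, hx1⟩ := hx
    have hu : 0 < 5 - x := by linarith
    have hxc1 : (0:ℝ) ≤ x ^ (c-1) := Real.rpow_nonneg hx0.le _
    have hxc : x ^ c = x ^ (c-1) * x := by
      rw [← Real.rpow_add_one hx0.ne' (c-1)]; ring_nf
    rw [hxc]
    have hne : (5 - x) ^ 2 ≠ 0 := by positivity
    have key : c * (4 / (5 - x) ^ 2 - 1) + x * (8 * (5 - x) / ((5 - x) ^ 2) ^ 2) ≤ 0 := by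
      have heq : c * (4 / (5 - x) ^ 2 - 1) + x * (8 * (5 - x) / ((5 - x) ^ 2) ^ 2)
          = (c * ((4 - (5 - x) ^ 2) * (5 - x) ^ 2) + 8 * x * (5 - x)) / ((5 - x) ^ 2) ^ 2 := by
        field_simp
      rw [heq]
      apply div_nonpos_of_nonpos_of_nonneg _ (by positivity)
      have h12 : (c - 1/2) * ((4 - (5 - x) ^ 2) * (5 - x) ^ 2) ≤ 0 :=
        mul_nonpos_of_nonneg_of_nonpos (by linarith)
          (mul_nonpos_of_nonpos_of_nonneg (by nlinarith) (sq_nonneg _))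
      nlinarith [sq_nonneg (5 - x)]
    calc c * x ^ (c-1) * (4 / (5 - x) ^ 2 - 1) + x ^ (c-1) * x * (8 * (5 - x) / ((5 - x) ^ 2) ^ 2)
        = x ^ (c-1) * (c * (4 / (5 - x) ^ 2 - 1) + x * (8 * (5 - x) / ((5 - x) ^ 2) ^ 2)) := by ring
      _ ≤ 0 := mul_nonpos_of_nonneg_of_nonpos hxc1 key
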